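/- Let w : ℝ → [1,∞) be an arbitrary weight function, let κ be a concave index function, and suppose ρ := ‖w · Ff_X · |κ(|Ff_ε|²/w²)|^{−1/2}‖ < ∞. Then there exists a constant C_κ > 0 depending only on κ such that for every α > 0, ‖w · Ff_X · 1{|Ff_ε|²/w² < α}‖² ≤ C_κ · κ(α) · ρ². -/

import Mathlib

/-!
Common setup for formalizing "Deconvolution with unknown error distribution"
(J. Johannes, Ann. Statist. 2009).
-/

noncomputable section

open MeasureTheory Filter Topology ProbabilityTheory

/-- The (unitary) Fourier transform `[Fg](t) = (2π)^{-1/2} ∫ e^{-itx} g(x) dx`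
of an integrable function `g : ℝ → ℂ`. -/
def ft (g : ℝ → ℂ) (t : ℝ) : ℂ :=
  (Real.sqrt (2 * Real.pi) : ℂ)⁻¹ * ∫ x : ℝ, Complex.exp (-(Complex.I * (t : ℂ) * (x : ℂ))) * g x

/-- Fourier transform of a real-valued function. -/
def ftR (g : ℝ → ℝ) (t : ℝ) : ℂ := ft (fun x => (g x : ℂ)) t

/-- `f` is a probability density on `ℝ` belonging to `L²(ℝ)`. -/
def IsDensity (f : ℝ → ℝ) : Prop :=
  (∀ x, 0 ≤ f x) ∧ Integrable f ∧ MemLp f 2 (volume : Measure ℝ) ∧ (∫ x, f x) = 1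

/-- convolution `f ⋆ g`. -/
def convol (f g : ℝ → ℝ) (y : ℝ) : ℝ := ∫ x : ℝ, f x * g (y - x)

/-- squared `L²(ℝ)`-distance between two (real-valued) functions. -/
def l2distSq (g h : ℝ → ℝ) : ℝ := ∫ x : ℝ, (g x - h x) ^ 2

/-- squared Sobolev `H_s`-distance between two functions *given by their Fourier
transforms* `G` and `H`:  `‖g - h‖_s² = ∫ (1+t²)^s |G(t) - H(t)|² dt`. -/
def sobDistSq (s : ℝ) (G H : ℝ → ℂ) : ℝ :=
  ∫ t : ℝ, (1 + t ^ 2) ^ s * ‖G t - H t‖ ^ 2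

/-- the measure on `ℝ` with (Lebesgue) density `f`. -/
def densMeasure (f : ℝ → ℝ) : Measure ℝ :=
  volume.withDensity fun x => ENNReal.ofReal (f x)

/-- the empirical Fourier transform `(m√(2π))^{-1} Σ_j e^{-itε_j}` of a sample `e`. -/
def empFT {m : ℕ} (e : Fin m → ℝ) (t : ℝ) : ℂ :=
  ((m : ℂ) * (Real.sqrt (2 * Real.pi) : ℂ))⁻¹ * ∑ j, Complex.exp (-(Complex.I * (t : ℂ) * (e j : ℂ)))

/-- `κ : (0,1] → ℝ⁺` (modeled as a function on `ℝ`) is an *index function*: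
continuous and strictly increasing on `(0,1]`, positive there, with `κ(0+) = 0`. -/
def IsIndexFunction (κ : ℝ → ℝ) : Prop :=
  ContinuousOn κ (Set.Ioc 0 1) ∧ StrictMonoOn κ (Set.Ioc 0 1) ∧
    (∀ t ∈ Set.Ioc (0 : ℝ) 1, 0 < κ t) ∧ Tendsto κ (𝓝[>] (0 : ℝ)) (𝓝 0)

lemma ftR_norm_le_one (f : ℝ → ℝ) (hf : IsDensity f) (t : ℝ) : ‖ftR f t‖ ≤ 1 := by
  obtain ⟨hpos, hint, _, htot⟩ := hf
  have hnorm : ∀ x : ℝ, ‖Complex.exp (-(Complex.I * (t : ℂ) * (x : ℂ))) * (f x : ℂ)‖ = f x := by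
    intro x
    rw [norm_mul, Complex.norm_exp]
    simp [abs_of_nonneg (hpos x)]
  have h1 : ‖ftR f t‖ ≤ (Real.sqrt (2 * Real.pi))⁻¹ *
      ∫ x : ℝ, ‖Complex.exp (-(Complex.I * (t : ℂ) * (x : ℂ))) * (f x : ℂ)‖ := by
    rw [ftR, ft, norm_mul]
    gcongr
    · rw [norm_inv, Complex.norm_real, Real.norm_eq_abs,
        abs_of_nonneg (Real.sqrt_nonneg _)]
    · exact norm_integral_le_integral_norm _
  have h2 : (∫ x : ℝ, ‖Complex.exp (-(Complex.I * (t : ℂ) * (x : ℂ))) * (f x : ℂ)‖) = 1 := by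
    rw [← htot]; exact integral_congr_ae (Filter.Eventually.of_forall hnorm)
  rw [h2, mul_one] at h1
  refine h1.trans ?_
  rw [inv_le_one_iff₀]
  right
  rw [show (1:ℝ) = Real.sqrt 1 by simp]
  exact Real.sqrt_le_sqrt (by nlinarith [Real.pi_gt_three])

/-- **Lemma A.1(iii)** (regularization bias, general source condition).
Let `w : ℝ → [1,∞)` be a weight function, let `κ` be a concave index function (defined
on `(0,1]`; note that `|Ff_ε(t)|²/w(t)² ∈ (0,1]`), and suppose
`ρ := ‖w · Ff_X · |κ(|Ff_ε|²/w²)|^{−1/2}‖ < ∞`.  Then there is a constant `C_κ > 0`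
depending only on `κ` such that, for every `α ∈ (0,1]`,
`‖w · Ff_X · 1{|Ff_ε|²/w² < α}‖² ≤ C_κ · κ(α) · ρ²`. -/
theorem lemma_A1_iii
    (fX fEps : ℝ → ℝ) (w : ℝ → ℝ) (hw : ∀ t, 1 ≤ w t)
    (hfX : IsDensity fX) (hfEps : IsDensity fEps)
    (hEpsPos : ∀ t, 0 < ‖ftR fEps t‖)
    (κ : ℝ → ℝ) (hκ : IsIndexFunction κ) (hκconc : ConcaveOn ℝ (Set.Ioc 0 1) κ)
    -- the source condition: `ρ² = ∫ w(t)² |Ff_X(t)|² / κ(|Ff_ε(t)|²/w(t)²) dt < ∞`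
    (hsrcInt : Integrable (fun t : ℝ =>
      (w t) ^ 2 * ‖ftR fX t‖ ^ 2 / κ (‖ftR fEps t‖ ^ 2 / (w t) ^ 2))) :
    ∃ C > 0, ∀ α : ℝ, 0 < α → α ≤ 1 →
      (∫ t : ℝ, if ‖ftR fEps t‖ ^ 2 / (w t) ^ 2 < α then (w t) ^ 2 * ‖ftR fX t‖ ^ 2 else 0)
        ≤ C * κ α *
          ∫ t : ℝ, (w t) ^ 2 * ‖ftR fX t‖ ^ 2 / κ (‖ftR fEps t‖ ^ 2 / (w t) ^ 2) := by
  refine ⟨1, one_pos, ?_⟩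
  intro α hα hα1
  set g : ℝ → ℝ := fun t => (w t) ^ 2 * ‖ftR fX t‖ ^ 2 with hg
  set q : ℝ → ℝ := fun t => ‖ftR fEps t‖ ^ 2 / (w t) ^ 2 with hqdef
  have hwpos : ∀ t, (0:ℝ) < w t := fun t => lt_of_lt_of_le one_pos (hw t)
  have hqmem : ∀ t, q t ∈ Set.Ioc (0:ℝ) 1 := by
    intro t
    constructor
    · exact div_pos (pow_pos (hEpsPos t) 2) (pow_pos (hwpos t) 2)
    · rw [show q t = ‖ftR fEps t‖ ^ 2 / (w t) ^ 2 from rfl,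
        div_le_one (pow_pos (hwpos t) 2)]
      have h1 : ‖ftR fEps t‖ ≤ 1 := ftR_norm_le_one fEps hfEps t
      nlinarith [norm_nonneg (ftR fEps t), hw t]
  have hκpos : ∀ t, 0 < κ (q t) := fun t => hκ.2.2.1 _ (hqmem t)
  have hκα : 0 < κ α := hκ.2.2.1 α ⟨hα, hα1⟩
  have hgnn : ∀ t, 0 ≤ g t := fun t => by positivity
  have hpt : ∀ t, (if q t < α then g t else 0) ≤ κ α * (g t / κ (q t)) := by
    intro t
    by_cases h : q t < α
    · rw [if_pos h]
      have hle : κ (q t) ≤ κ α := (hκ.2.1 (hqmem t) ⟨hα, hα1⟩ h).le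
      calc g t = κ (q t) * (g t / κ (q t)) := by
                rw [mul_comm, div_mul_cancel₀ _ (hκpos t).ne']
        _ ≤ κ α * (g t / κ (q t)) :=
                mul_le_mul_of_nonneg_right hle (div_nonneg (hgnn t) (hκpos t).le)
    · rw [if_neg h]
      exact mul_nonneg hκα.le (div_nonneg (hgnn t) (hκpos t).le)
  have hmono := integral_mono_of_nonneg
    (f := fun t => if q t < α then g t else 0)
    (g := fun t => κ α * (g t / κ (q t)))
    (Filter.Eventually.of_forall (fun t => by positivity))
    (hsrcInt.const_mul (κ α))
    (Filter.Eventually.of_forall hpt)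
  rw [integral_const_mul] at hmono
  simpa [one_mul] using hmono
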